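/- (Intertwining identities G₊∘E∘W⁻¹ = Ĩ = W·(E∘G₋).) For every integrable h : α → ℝ and every x ∈ α: (i) G₊( E( W⁻¹·h ) )(x) = h(x) − ⟨h⟩; (ii) W(x) · E( G₋ h )(x) = h(x) − ⟨h⟩. -/

import Mathlib

open MeasureTheory

/-- Total (coordinate) volume `V := μ(α)` as a real number. -/
noncomputable def totalVol {α : Type*} [MeasurableSpace α] (μ : Measure α) : ℝ :=
  (μ Set.univ).toReal

/-- Spatial average `⟨f⟩ := (1/V) ∫ f dμ`. -/
noncomputable def avg {α : Type*} [MeasurableSpace α] (μ : Measure α) (f : α → ℝ) : ℝ :=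
  (totalVol μ)⁻¹ * ∫ x, f x ∂μ

/-- The delocalization operator `E`:
`(E g)(x) = g(x) + ⟨g⟩ − W(x)⁻¹ ⟨W·g⟩`. -/
noncomputable def opE {α : Type*} [MeasurableSpace α] (μ : Measure α) (W : α → ℝ)
    (g : α → ℝ) : α → ℝ :=
  fun x => g x + avg μ g - (W x)⁻¹ * avg μ (fun y => W y * g y)

/-- The operator `E⁻¹`:
`(E⁻¹ h)(x) = h(x) − W(x)⁻¹ (∫h)/(∫W⁻¹) − (∫W·h)/(∫W) + 2 W(x)⁻¹ V (∫W·h)/((∫W⁻¹)(∫W))`. -/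
noncomputable def opEinv {α : Type*} [MeasurableSpace α] (μ : Measure α) (W : α → ℝ)
    (h : α → ℝ) : α → ℝ :=
  fun x => h x
    - (W x)⁻¹ * (∫ y, h y ∂μ) / (∫ y, (W y)⁻¹ ∂μ)
    - (∫ y, W y * h y ∂μ) / (∫ y, W y ∂μ)
    + 2 * (W x)⁻¹ * totalVol μ * (∫ y, W y * h y ∂μ)
        / ((∫ y, (W y)⁻¹ ∂μ) * (∫ y, W y ∂μ))

/-- The projector-type operator `G₊`:
`(G₊ h)(x) = W(x)·h(x) − W(x)·(∫W·h)/(∫W)`. -/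
noncomputable def opGplus {α : Type*} [MeasurableSpace α] (μ : Measure α) (W : α → ℝ)
    (h : α → ℝ) : α → ℝ :=
  fun x => W x * h x - W x * (∫ y, W y * h y ∂μ) / (∫ y, W y ∂μ)

/-- The projector-type operator `G₋`:
`(G₋ h)(x) = W(x)⁻¹·h(x) − W(x)⁻¹·(∫W⁻¹·h)/(∫W⁻¹)`. -/
noncomputable def opGminus {α : Type*} [MeasurableSpace α] (μ : Measure α) (W : α → ℝ)
    (h : α → ℝ) : α → ℝ :=
  fun x => (W x)⁻¹ * h x - (W x)⁻¹ * (∫ y, (W y)⁻¹ * h y ∂μ) / (∫ y, (W y)⁻¹ ∂μ)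

/-- Intertwining identities `G₊∘E∘W⁻¹ = Ĩ = W·(E∘G₋)`.
For every integrable `h` and every `x`:
(i) `G₊(E(W⁻¹·h))(x) = h(x) − ⟨h⟩`;
(ii) `W(x)·E(G₋ h)(x) = h(x) − ⟨h⟩`. -/
theorem opG_intertwining
    {α : Type*} [MeasurableSpace α] (μ : Measure α) [IsFiniteMeasure μ]
    (hV : 0 < totalVol μ)
    (W : α → ℝ) (hW : Measurable W)
    (c C : ℝ) (hc : 0 < c) (hcC : c ≤ C)
    (hbound : ∀ x, c ≤ W x ∧ W x ≤ C) :
    ∀ h : α → ℝ, Integrable h μ → ∀ x,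
      (opGplus μ W (opE μ W (fun y => (W y)⁻¹ * h y)) x = h x - avg μ h) ∧
      (W x * opE μ W (opGminus μ W h) x = h x - avg μ h) := by
  intro h hh x
  have hWpos : ∀ y, 0 < W y := fun y => lt_of_lt_of_le hc (hbound y).1
  have hW0 : ∀ y, W y ≠ 0 := fun y => (hWpos y).ne'
  have hVne : totalVol μ ≠ 0 := hV.ne'
  have hWb : ∀ y, ‖W y‖ ≤ C := fun y => by
    rw [Real.norm_eq_abs, abs_of_pos (hWpos y)]; exact (hbound y).2
  have hWib : ∀ y, ‖(W y)⁻¹‖ ≤ c⁻¹ := fun y => by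
    rw [Real.norm_eq_abs, abs_of_pos (inv_pos.2 (hWpos y))]
    exact inv_anti₀ hc (hbound y).1
  have IntW : Integrable W μ :=
    (integrable_const C).mono' hW.aestronglyMeasurable (Filter.Eventually.of_forall hWb)
  have IntWinv : Integrable (fun y => (W y)⁻¹) μ :=
    (integrable_const c⁻¹).mono' hW.inv.aestronglyMeasurable (Filter.Eventually.of_forall hWib)
  have IntWh : Integrable (fun y => W y * h y) μ :=
    hh.bdd_mul hW.aestronglyMeasurable (Filter.Eventually.of_forall hWb)
  have IntWih : Integrable (fun y => (W y)⁻¹ * h y) μ :=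
    hh.bdd_mul hW.inv.aestronglyMeasurable (Filter.Eventually.of_forall hWib)
  have hconst : ∀ b : ℝ, ∫ _, b ∂μ = totalVol μ * b := fun b => by
    rw [integral_const, totalVol, smul_eq_mul, measureReal_def]
  have hIWne : (∫ y, W y ∂μ) ≠ 0 := by
    have h1 : ∫ _, c ∂μ ≤ ∫ y, W y ∂μ :=
      integral_mono (integrable_const _) IntW fun y => (hbound y).1
    rw [hconst] at h1
    exact (lt_of_lt_of_le (by positivity) h1).ne'
  have hI1ne : (∫ y, (W y)⁻¹ ∂μ) ≠ 0 := by
    have hCpos : 0 < C := lt_of_lt_of_le hc hcC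
    have h1 : ∫ _, C⁻¹ ∂μ ≤ ∫ y, (W y)⁻¹ ∂μ :=
      integral_mono (integrable_const _) IntWinv fun y =>
        inv_anti₀ (hWpos y) (hbound y).2
    rw [hconst] at h1
    exact (lt_of_lt_of_le (by positivity) h1).ne'
  set V := totalVol μ with hVdef
  set A := ∫ y, h y ∂μ with hA
  set J := ∫ y, (W y)⁻¹ * h y ∂μ with hJ
  set I1 := ∫ y, (W y)⁻¹ ∂μ with hI1
  set IW := ∫ y, W y ∂μ with hIW
  -- Part (i)
  have hWWinv : (fun y => W y * ((W y)⁻¹ * h y)) = h := funext fun y => by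
    rw [← mul_assoc, mul_inv_cancel₀ (hW0 y), one_mul]
  have hEg : ∀ y, opE μ W (fun z => (W z)⁻¹ * h z) y
      = (W y)⁻¹ * h y + V⁻¹ * J - (W y)⁻¹ * (V⁻¹ * A) := by
    intro y
    simp only [opE, avg, hWWinv, ← hVdef, ← hA, ← hJ]
  have hEgInt : (fun y => W y * opE μ W (fun z => (W z)⁻¹ * h z) y)
      = fun y => h y + V⁻¹ * J * W y - V⁻¹ * A := by
    funext y
    rw [hEg y, mul_sub, mul_add, ← mul_assoc (W y) (W y)⁻¹, mul_inv_cancel₀ (hW0 y), one_mul,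
      ← mul_assoc (W y) (W y)⁻¹, mul_inv_cancel₀ (hW0 y), one_mul]
    ring
  have i1 : Integrable (fun y => h y + V⁻¹ * J * W y) μ := hh.add (IntW.const_mul _)
  have hInt1 : ∫ y, W y * opE μ W (fun z => (W z)⁻¹ * h z) y ∂μ = V⁻¹ * J * IW := by
    rw [hEgInt, integral_sub i1 (integrable_const _),
      integral_add hh (IntW.const_mul _), integral_const_mul, hconst, ← hA, ← hIW]
    field_simp
    ring
  -- Part (ii) integrals
  have hGmInt0 : ∫ y, opGminus μ W h y ∂μ = 0 := by
    have e : (fun y => opGminus μ W h y) = fun y => (W y)⁻¹ * h y - J / I1 * (W y)⁻¹ := by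
      funext y; simp only [opGminus, ← hJ, ← hI1]; ring
    rw [e, integral_sub IntWih (IntWinv.const_mul _), integral_const_mul, ← hJ, ← hI1]
    field_simp
    simp
  have hWGmInt : ∫ y, W y * opGminus μ W h y ∂μ = A - V * (J / I1) := by
    have e : (fun y => W y * opGminus μ W h y) = fun y => h y - J / I1 := by
      funext y; simp only [opGminus, ← hJ, ← hI1]
      rw [mul_sub, ← mul_assoc, mul_inv_cancel₀ (hW0 y), one_mul, mul_div_assoc,
        ← mul_assoc, mul_inv_cancel₀ (hW0 y), one_mul]
    rw [e, integral_sub hh (integrable_const _), hconst, ← hA]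
  constructor
  · simp only [opGplus, hInt1, hEg x, avg, ← hVdef, ← hA, ← hIW]
    field_simp [hW0 x]
    ring
  · simp only [opE, avg]
    rw [hGmInt0, hWGmInt]
    simp only [opGminus, ← hJ, ← hI1, ← hVdef, ← hA]
    field_simp [hW0 x]
    ring
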